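/- For every integer k ≥ 2 there exist infinitely many balanced bipartite graphs G with minimum degree exactly k and forest number f(G) = |V(G)|/2 + 2. -/

import Mathlib

open Finset SimpleGraph

section helpers

lemma getVert_mem_support {V : Type*} {G : SimpleGraph V} {u v : V}
    (p : G.Walk u v) (i : ℕ) : p.getVert i ∈ p.support := by
  induction p generalizing i with
  | nil => simp [SimpleGraph.Walk.getVert]
  | cons h q ih =>
    cases i with
    | zero => simp [SimpleGraph.Walk.getVert]
    | succ n => simp [SimpleGraph.Walk.getVert_cons_succ, ih n]

lemma isPath_getVert_ne {V : Type*} {G : SimpleGraph V} {u v : V}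
    {p : G.Walk u v} (hp : p.IsPath) {i j : ℕ} (hij : i < j) (hj : j ≤ p.length) :
    p.getVert i ≠ p.getVert j := by
  induction p generalizing i j with
  | nil => simp at hj; omega
  | cons h q ih =>
    cases i with
    | zero =>
      obtain ⟨j, rfl⟩ : ∃ j', j = j' + 1 := ⟨j - 1, by omega⟩
      rw [SimpleGraph.Walk.getVert_zero, SimpleGraph.Walk.getVert_cons_succ]
      intro hEq
      exact ((SimpleGraph.Walk.cons_isPath_iff _ _).mp hp).2 (hEq ▸ getVert_mem_support q j)
    | succ n =>
      obtain ⟨j, rfl⟩ : ∃ j', j = j' + 1 := ⟨j - 1, by omega⟩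
      rw [SimpleGraph.Walk.getVert_cons_succ, SimpleGraph.Walk.getVert_cons_succ]
      exact ih ((SimpleGraph.Walk.cons_isPath_iff _ _).mp hp).1 (by omega)
        (by simpa using Nat.succ_le_succ_iff.mp hj)

lemma acyclic_of_centers {V : Type*} [DecidableEq V] {G : SimpleGraph V} (C : V → Prop)
    (h1 : ∀ a b, G.Adj a b → (C a ↔ ¬ C b))
    (h2 : ∀ a b c, G.Adj b a → G.Adj b c → ¬ C b → a = c) : G.IsAcyclic := by
  have aux : ∀ (u : V) (c : G.Walk u u), c.IsCycle → ¬ C u → False := by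
    intro u c hc hu
    cases c with
    | nil => exact hc.ne_nil rfl
    | cons h q =>
      have hq := (SimpleGraph.Walk.cons_isCycle_iff _ _).mp hc
      have hlen : 2 ≤ q.length := by
        have := hc.three_le_length
        simpa using this
      have hadj : G.Adj (q.getVert (q.length - 1)) u := by
        have := q.adj_getVert_succ (i := q.length - 1) (by omega)
        rwa [show q.length - 1 + 1 = q.length by omega, q.getVert_length] at this
      have heq := h2 _ u _ h hadj.symm hu
      have hne := isPath_getVert_ne hq.1 (i := 0) (j := q.length - 1) (by omega) (by omega)
      rw [q.getVert_zero] at hne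
      exact hne heq
  intro u c hc
  by_cases hu : C u
  · have hnn : ¬ c.Nil := hc.not_nil
    have hadj : G.Adj u (c.getVert 1) := c.adj_snd hnn
    have hv : ¬ C (c.getVert 1) := (h1 _ _ hadj).mp hu
    have hmem : c.getVert 1 ∈ c.support := getVert_mem_support c 1
    exact aux _ (c.rotate _ hmem) (hc.rotate hmem) hv
  · exact aux u c hc hu

lemma card_filter_ico (n a b : ℕ) (hb : b ≤ n) :
    ((Finset.univ : Finset (Fin n)).filter (fun v => a ≤ v.val ∧ v.val < b)).card = b - a := by
  rw [← Nat.card_Ico a b]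
  refine Finset.card_bij' (fun v _ => v.val)
    (fun i hi => (⟨i, lt_of_lt_of_le (Finset.mem_Ico.mp hi).2 hb⟩ : Fin n)) ?_ ?_ ?_ ?_
  · intro v hv
    simp only [Finset.mem_filter] at hv
    exact Finset.mem_Ico.mpr hv.2
  · intro i hi
    simp only [Finset.mem_filter, Finset.mem_univ, true_and]
    exact ⟨(Finset.mem_Ico.mp hi).1, (Finset.mem_Ico.mp hi).2⟩
  · intro v hv; rfl
  · intro i hi; rfl

lemma not_acyclic_of_c4 {V : Type*} [DecidableEq V] {G : SimpleGraph V} {a b c d : V}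
    (hab : a ≠ b) (hcd : c ≠ d)
    (h1 : G.Adj a c) (h2 : G.Adj c b) (h3 : G.Adj b d) (h4 : G.Adj d a) :
    ¬ G.IsAcyclic := by
  intro hG
  have nac : a ≠ c := h1.ne
  have ncb : c ≠ b := h2.ne
  have nbd : b ≠ d := h3.ne
  have nda : d ≠ a := h4.ne
  apply hG (SimpleGraph.Walk.cons h1 (.cons h2 (.cons h3 (.cons h4 .nil))))
  rw [SimpleGraph.Walk.isCycle_def, SimpleGraph.Walk.isTrail_def]
  refine ⟨?_, by simp, ?_⟩
  · simp only [SimpleGraph.Walk.edges_cons, SimpleGraph.Walk.edges_nil, List.nodup_cons,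
      List.mem_cons, List.not_mem_nil, or_false, List.nodup_nil, and_true, Sym2.eq,
      Sym2.rel_iff', Prod.mk.injEq, Prod.swap_prod_mk]
    push_neg
    tauto
  · simp only [SimpleGraph.Walk.support_cons, SimpleGraph.Walk.support_nil, List.tail_cons,
      List.nodup_cons, List.mem_cons, List.not_mem_nil, or_false, List.nodup_nil, and_true]
    push_neg
    tauto

end helpers

section construction

/-- component predicate. -/
def bT (m k : ℕ) (v : Fin (2*m)) : Prop := v.val < k ∨ (m ≤ v.val ∧ v.val < m + k)

instance (m k : ℕ) (v : Fin (2*m)) : Decidable (bT m k v) := by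
  unfold bT; infer_instance

/-- The graph: disjoint union of K_{k,k} and K_{m-k,m-k}, bipartite by val < m. -/
def bG (m k : ℕ) : SimpleGraph (Fin (2*m)) where
  Adj u v := ((u.val < m) ↔ ¬(v.val < m)) ∧ (bT m k u ↔ bT m k v)
  symm := by
    constructor
    intro u v h
    obtain ⟨h1, h2⟩ := h
    exact ⟨by tauto, h2.symm⟩
  loopless := by constructor; intro u h; tauto

lemma bG_adj (m k : ℕ) (u v : Fin (2*m)) :
    (bG m k).Adj u v ↔ (((u:ℕ) < m) ↔ ¬((v:ℕ) < m)) ∧ (bT m k u ↔ bT m k v) := Iff.rfl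

instance (m k : ℕ) : DecidableRel (bG m k).Adj := fun u v => by
  rw [bG_adj]; infer_instance

lemma bG_nbr (m k : ℕ) (v : Fin (2*m)) (a b : ℕ)
    (hab : ∀ u : Fin (2*m), (bG m k).Adj v u ↔ (a ≤ u.val ∧ u.val < b)) (hb : b ≤ 2*m) :
    (bG m k).degree v = b - a := by
  rw [← SimpleGraph.card_neighborFinset_eq_degree, ← card_filter_ico (2*m) a b hb]
  congr 1
  ext u
  rw [SimpleGraph.mem_neighborFinset, Finset.mem_filter, hab u]
  simp

lemma bG_degree (m k : ℕ) (hk : 2 ≤ k) (hm : 2*k ≤ m) (v : Fin (2*m)) :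
    (bG m k).degree v = if bT m k v then k else m - k := by
  have hv2 := v.isLt
  by_cases hT : bT m k v
  · rw [if_pos hT]; unfold bT at hT
    by_cases hL : (v : ℕ) < m
    · have h := bG_nbr m k v m (m+k) (fun u => by
        rw [bG_adj]; unfold bT; have := u.isLt
        constructor
        · intro h; omega
        · intro h; omega) (by omega)
      exact h.trans (by omega)
    · have h := bG_nbr m k v 0 k (fun u => by
        rw [bG_adj]; unfold bT; have := u.isLt
        constructor
        · intro h; omega
        · intro h; omega) (by omega)
      exact h.trans (by omega)
  · rw [if_neg hT]; unfold bT at hT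
    by_cases hL : (v : ℕ) < m
    · have h := bG_nbr m k v (m+k) (2*m) (fun u => by
        rw [bG_adj]; unfold bT; have := u.isLt
        constructor
        · intro h; omega
        · intro h; omega) (by omega)
      exact h.trans (by omega)
    · have h := bG_nbr m k v k m (fun u => by
        rw [bG_adj]; unfold bT; have := u.isLt
        constructor
        · intro h; omega
        · intro h; omega) (by omega)
      exact h.trans (by omega)

lemma card_split_four {α : Type*} (S : Finset α) (p q : α → Prop)
    [DecidablePred p] [DecidablePred q] :
    S.card = (S.filter fun v => p v ∧ q v).card + (S.filter fun v => p v ∧ ¬ q v).card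
      + (S.filter fun v => ¬ p v ∧ q v).card + (S.filter fun v => ¬ p v ∧ ¬ q v).card := by
  have e1 := Finset.card_filter_add_card_filter_not (s := S) (p := p)
  have e2 := Finset.card_filter_add_card_filter_not
    (s := S.filter p) (p := q)
  have e3 := Finset.card_filter_add_card_filter_not
    (s := S.filter fun v => ¬ p v) (p := q)
  rw [Finset.filter_filter, Finset.filter_filter] at e2 e3
  omega

lemma bG_forest_le (m k : ℕ) (hk : 2 ≤ k) (hm : 2*k ≤ m) (S : Finset (Fin (2*m)))
    (hS : ((bG m k).induce (S : Set (Fin (2*m)))).IsAcyclic) : S.card ≤ m + 2 := by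
  classical
  -- the C4 exclusion
  have hc4 : ∀ (a b c d : Fin (2*m)), a ∈ S → b ∈ S → c ∈ S → d ∈ S → a ≠ b → c ≠ d →
      (bG m k).Adj a c → (bG m k).Adj c b → (bG m k).Adj b d → (bG m k).Adj d a → False := by
    intro a b c d ha hb hc hd hab hcd g1 g2 g3 g4
    have ha' : a ∈ (S : Set (Fin (2*m))) := by simpa using ha
    have hb' : b ∈ (S : Set (Fin (2*m))) := by simpa using hb
    have hc' : c ∈ (S : Set (Fin (2*m))) := by simpa using hc
    have hd' : d ∈ (S : Set (Fin (2*m))) := by simpa using hd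
    refine not_acyclic_of_c4 (G := (bG m k).induce (S : Set (Fin (2*m))))
      (a := ⟨a, ha'⟩) (b := ⟨b, hb'⟩) (c := ⟨c, hc'⟩) (d := ⟨d, hd'⟩)
      (fun h => hab (congrArg Subtype.val h)) (fun h => hcd (congrArg Subtype.val h))
      g1 g2 g3 g4 hS
  have hsplit := card_split_four S (fun v => v.val < m) (fun v => bT m k v)
  have bnd : ∀ (a b : ℕ) (P : Fin (2*m) → Prop) [DecidablePred P], b ≤ 2*m →
      (∀ v, P v → a ≤ v.val ∧ v.val < b) → (S.filter P).card ≤ b - a := by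
    intro a b P _ hb hP
    rw [← card_filter_ico (2*m) a b hb]
    apply Finset.card_le_card
    intro v hv
    simp only [Finset.mem_filter, Finset.mem_univ, true_and] at hv ⊢
    exact hP v hv.2
  have hA1k : (S.filter fun v => v.val < m ∧ bT m k v).card ≤ k := by
    have := bnd 0 k (fun v => v.val < m ∧ bT m k v) (by omega)
      (fun v hv => by unfold bT at hv; omega)
    omega
  have hA2k : (S.filter fun v => v.val < m ∧ ¬ bT m k v).card ≤ m - k := by
    have := bnd k m (fun v => v.val < m ∧ ¬ bT m k v) (by omega)
      (fun v hv => by unfold bT at hv; omega)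
    omega
  have hB1k : (S.filter fun v => ¬ v.val < m ∧ bT m k v).card ≤ k := by
    have := bnd m (m+k) (fun v => ¬ v.val < m ∧ bT m k v) (by omega)
      (fun v hv => by unfold bT at hv; omega)
    omega
  have hB2k : (S.filter fun v => ¬ v.val < m ∧ ¬ bT m k v).card ≤ m - k := by
    have := bnd (m+k) (2*m) (fun v => ¬ v.val < m ∧ ¬ bT m k v) (by omega)
      (fun v hv => by unfold bT at hv; have := v.isLt; omega)
    omega
  have hex1 : (S.filter fun v => v.val < m ∧ bT m k v).card ≤ 1 ∨
      (S.filter fun v => ¬ v.val < m ∧ bT m k v).card ≤ 1 := by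
    by_contra hcon
    push_neg at hcon
    obtain ⟨a, ha, b, hb, hab⟩ := Finset.one_lt_card.mp hcon.1
    obtain ⟨c, hc, d, hd, hcd⟩ := Finset.one_lt_card.mp hcon.2
    rw [Finset.mem_filter] at ha hb hc hd
    refine hc4 a b c d ha.1 hb.1 hc.1 hd.1 hab hcd ?_ ?_ ?_ ?_ <;>
      (rw [bG_adj] <;> simp only [bT] at * <;> omega)
  have hex2 : (S.filter fun v => v.val < m ∧ ¬ bT m k v).card ≤ 1 ∨
      (S.filter fun v => ¬ v.val < m ∧ ¬ bT m k v).card ≤ 1 := by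
    by_contra hcon
    push_neg at hcon
    obtain ⟨a, ha, b, hb, hab⟩ := Finset.one_lt_card.mp hcon.1
    obtain ⟨c, hc, d, hd, hcd⟩ := Finset.one_lt_card.mp hcon.2
    rw [Finset.mem_filter] at ha hb hc hd
    refine hc4 a b c d ha.1 hb.1 hc.1 hd.1 hab hcd ?_ ?_ ?_ ?_ <;>
      (rw [bG_adj] <;> simp only [bT] at * <;> omega)
  omega

lemma bG_forest_ge (m k : ℕ) (hk : 2 ≤ k) (hm : 2*k ≤ m) :
    ∃ S : Finset (Fin (2*m)), S.card = m + 2 ∧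
      ((bG m k).induce (S : Set (Fin (2*m)))).IsAcyclic := by
  classical
  have hy1 : m < 2*m := by omega
  have hy2 : m + k < 2*m := by omega
  set y1 : Fin (2*m) := ⟨m, hy1⟩ with hy1d
  set y2 : Fin (2*m) := ⟨m+k, hy2⟩ with hy2d
  have hvy1 : (y1 : ℕ) = m := rfl
  have hvy2 : (y2 : ℕ) = m + k := rfl
  set S : Finset (Fin (2*m)) :=
    (Finset.univ.filter fun v : Fin (2*m) => v.val < m) ∪ {y1, y2} with hSd
  have hmemS : ∀ v : Fin (2*m), v ∈ S ↔ (v.val < m ∨ v = y1 ∨ v = y2) := by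
    intro v
    rw [hSd, Finset.mem_union, Finset.mem_filter, Finset.mem_insert, Finset.mem_singleton]
    simp only [Finset.mem_univ, true_and]
  have hne : y1 ≠ y2 := by
    intro h
    have := congrArg Fin.val h
    rw [hvy1, hvy2] at this
    omega
  have hdisj : Disjoint (Finset.univ.filter fun v : Fin (2*m) => v.val < m)
      ({y1, y2} : Finset (Fin (2*m))) := by
    rw [Finset.disjoint_left]
    intro v hv hv2
    rw [Finset.mem_filter] at hv
    rw [Finset.mem_insert, Finset.mem_singleton] at hv2
    rcases hv2 with rfl | rfl
    · rw [hvy1] at hv; omega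
    · rw [hvy2] at hv; omega
  refine ⟨S, ?_, ?_⟩
  · rw [hSd, Finset.card_union_of_disjoint hdisj, Finset.card_pair hne]
    have he : (Finset.univ.filter fun v : Fin (2*m) => v.val < m)
        = Finset.univ.filter (fun v : Fin (2*m) => 0 ≤ v.val ∧ v.val < m) := by
      ext v; simp
    rw [he, card_filter_ico _ _ _ (by omega)]
    omega
  · apply acyclic_of_centers (C := fun x : ↥(S : Set (Fin (2*m))) => ¬ (x : Fin (2*m)).val < m)
    · intro a b hab
      obtain ⟨h1, _⟩ := hab
      tauto
    · intro a b c g1 g2 hb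
      push_neg at hb
      obtain ⟨e1, f1⟩ := g1
      obtain ⟨e2, f2⟩ := g2
      have hal : ¬ ((a : Fin (2*m)) : ℕ) < m := e1.mp hb
      have hcl : ¬ ((c : Fin (2*m)) : ℕ) < m := e2.mp hb
      have haS : (a : Fin (2*m)) ∈ S := by
        have := a.2; simpa using this
      have hcS : (c : Fin (2*m)) ∈ S := by
        have := c.2; simpa using this
      rw [hmemS] at haS hcS
      have hav : ((a : Fin (2*m)) : ℕ) = m ∨ ((a : Fin (2*m)) : ℕ) = m + k := by
        rcases haS with h | h | h
        · omega
        · left; rw [h, hvy1]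
        · right; rw [h, hvy2]
      have hcv : ((c : Fin (2*m)) : ℕ) = m ∨ ((c : Fin (2*m)) : ℕ) = m + k := by
        rcases hcS with h | h | h
        · omega
        · left; rw [h, hvy1]
        · right; rw [h, hvy2]
      have hbt : bT m k (a : Fin (2*m)) ↔ bT m k (c : Fin (2*m)) := f1.symm.trans f2
      unfold bT at hbt
      apply Subtype.ext
      apply Fin.ext
      omega

end construction

/-- The forest number of `G`: the maximum size of a vertex subset inducing an acyclic
(induced) subgraph. -/
noncomputable def forestNum {V : Type} [Fintype V] (G : SimpleGraph V) : ℕ :=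
  sSup {k | ∃ S : Finset V, S.card = k ∧ (G.induce (S : Set V)).IsAcyclic}

theorem stmt12 (k : ℕ) (hk : 2 ≤ k) (N : ℕ) :
    ∃ m : ℕ, N ≤ m ∧
      ∃ (G : SimpleGraph (Fin (2 * m))) (_ : DecidableRel G.Adj)
        (V1 V2 : Finset (Fin (2 * m))),
        Disjoint V1 V2 ∧ V1 ∪ V2 = Finset.univ ∧ V1.card = m ∧ V2.card = m ∧
        (∀ u v, G.Adj u v → (u ∈ V1 ∧ v ∈ V2) ∨ (u ∈ V2 ∧ v ∈ V1)) ∧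
        (∀ v, k ≤ G.degree v) ∧ (∃ v, G.degree v = k) ∧
        forestNum G = m + 2 := by
  classical
  set m := max N (2*k) with hmd
  have hm : 2*k ≤ m := le_max_right _ _
  have hN : N ≤ m := le_max_left _ _
  refine ⟨m, hN, bG m k, inferInstance,
    Finset.univ.filter (fun v : Fin (2*m) => (v:ℕ) < m),
    Finset.univ.filter (fun v : Fin (2*m) => ¬ (v:ℕ) < m), ?_, ?_, ?_, ?_, ?_, ?_, ?_, ?_⟩
  · exact Finset.disjoint_filter_filter_not _ _ _
  · exact Finset.filter_union_filter_not_eq _ _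
  · have he : (Finset.univ.filter fun v : Fin (2*m) => (v:ℕ) < m)
        = Finset.univ.filter (fun v : Fin (2*m) => 0 ≤ (v:ℕ) ∧ (v:ℕ) < m) := by
      ext v; simp
    rw [he, card_filter_ico _ _ _ (by omega)]
    omega
  · have he : (Finset.univ.filter fun v : Fin (2*m) => ¬ (v:ℕ) < m)
        = Finset.univ.filter (fun v : Fin (2*m) => m ≤ (v:ℕ) ∧ (v:ℕ) < 2*m) := by
      ext v; have := v.isLt; simp [this]
    rw [he, card_filter_ico _ _ _ (by omega)]
    omega
  · intro u v huv
    obtain ⟨h1, _⟩ := huv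
    by_cases hu : (u:ℕ) < m
    · left; simp only [Finset.mem_filter, Finset.mem_univ, true_and]; tauto
    · right; simp only [Finset.mem_filter, Finset.mem_univ, true_and]; tauto
  · intro v
    rw [bG_degree m k hk hm]
    split_ifs <;> omega
  · refine ⟨⟨0, by omega⟩, ?_⟩
    rw [bG_degree m k hk hm, if_pos]
    unfold bT
    left
    simp
    omega
  · obtain ⟨S0, hS0c, hS0a⟩ := bG_forest_ge m k hk hm
    have hmem : m + 2 ∈ {n | ∃ S : Finset (Fin (2*m)), S.card = n ∧
        ((bG m k).induce (S : Set (Fin (2*m)))).IsAcyclic} := ⟨S0, hS0c, hS0a⟩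
    have hub : ∀ n ∈ {n | ∃ S : Finset (Fin (2*m)), S.card = n ∧
        ((bG m k).induce (S : Set (Fin (2*m)))).IsAcyclic}, n ≤ m + 2 := by
      rintro n ⟨S, rfl, hS⟩
      exact bG_forest_le m k hk hm S hS
    unfold forestNum
    exact le_antisymm (csSup_le ⟨_, hmem⟩ hub) (le_csSup ⟨m+2, hub⟩ hmem)
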